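/- Let a ∈ F and let f(z) = ∑_{j≥0} c_j (z−a)^j be a power series with coefficients in F with radius of convergence R, 0 < R ≤ ∞. Let b ∈ F with |b−a| < R. Then the power series ∑_{n≥0} D^n f(b) (z−b)^n also has radius of convergence R, and for every z with |z−b| < R it converges to f(z). -/

import Mathlib

open Filter Topology

variable {F : Type*} [NontriviallyNormedField F]

/-- Value of the power series with coefficients `a` at `z`. -/
noncomputable def psEval (a : ℕ → F) (z : F) : F := ∑' n : ℕ, a n * z ^ n

/-- Value of the Laurent series with coefficients `c` at `z`. -/
noncomputable def lEval (c : ℤ → F) (z : F) : F := ∑' n : ℤ, c n * z ^ n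

/-- Gauss norm `|f|_r = sup_n |a_n| r^n` of a power series. -/
noncomputable def pNorm (a : ℕ → F) (r : ℝ) : ℝ := ⨆ n : ℕ, ‖a n‖ * r ^ n

/-- Gauss norm `|f|_r = sup_n |c_n| r^n` of a Laurent series. -/
noncomputable def lNorm (c : ℤ → F) (r : ℝ) : ℝ := ⨆ n : ℤ, ‖c n‖ * r ^ n

/-- The Laurent series `c` is analytic on the annulus `A[r1,r2]`. -/
def LaurentOn (c : ℤ → F) (r1 r2 : ℝ) : Prop :=
  ∀ r : ℝ, r1 ≤ r → r ≤ r2 → Tendsto (fun n : ℤ => ‖c n‖ * r ^ n) cofinite (nhds 0)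

/-- The Laurent series `c` is analytic on `A[r1,∞)`. -/
def LaurentOnInfty (c : ℤ → F) (r1 : ℝ) : Prop :=
  ∀ r : ℝ, r1 ≤ r → Tendsto (fun n : ℤ => ‖c n‖ * r ^ n) cofinite (nhds 0)

/-- The power series `a` is analytic on the closed ball `B_{≤ r}`. -/
def PSOnClosed (a : ℕ → F) (r : ℝ) : Prop :=
  Tendsto (fun n : ℕ => ‖a n‖ * r ^ n) atTop (nhds 0)

/-- The power series `a` is analytic on the open ball `B_{< R}`. -/
def PSOnOpen (a : ℕ → F) (R : ℝ) : Prop :=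
  ∀ r : ℝ, 0 < r → r < R → Tendsto (fun n : ℕ => ‖a n‖ * r ^ n) atTop (nhds 0)

/-- The power series `a` is entire: it converges on all of `F`. -/
def Entire (a : ℕ → F) : Prop :=
  ∀ r : ℝ, 0 < r → Tendsto (fun n : ℕ => ‖a n‖ * r ^ n) atTop (nhds 0)

/-- `k(f,r)` for a Laurent series. -/
noncomputable def kk (c : ℤ → F) (r : ℝ) : ℤ := sInf {n : ℤ | ‖c n‖ * r ^ n = lNorm c r}

/-- `K(f,r)` for a Laurent series. -/
noncomputable def KK (c : ℤ → F) (r : ℝ) : ℤ := sSup {n : ℤ | ‖c n‖ * r ^ n = lNorm c r}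

/-- Product of two Laurent series. -/
noncomputable def laurentMul (c d : ℤ → F) : ℤ → F := fun n => ∑' i : ℤ, c i * d (n - i)

/-- The Laurent series `1`. -/
noncomputable def laurentOne : ℤ → F := fun n => if n = 0 then 1 else 0

/-- Gauss norm of a polynomial. -/
noncomputable def pgNorm (P : Polynomial F) (r : ℝ) : ℝ := ⨆ n : ℕ, ‖P.coeff n‖ * r ^ n

/-- `k(P,r)` for a polynomial. -/
noncomputable def kP (P : Polynomial F) (r : ℝ) : ℕ :=
  sInf {n : ℕ | ‖P.coeff n‖ * r ^ n = pgNorm P r}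

/-- `K(P,r)` for a polynomial. -/
noncomputable def KP (P : Polynomial F) (r : ℝ) : ℕ :=
  sSup {n : ℕ | ‖P.coeff n‖ * r ^ n = pgNorm P r}

/-- A polynomial regarded as a Laurent series. -/
noncomputable def polyToLaurent (P : Polynomial F) : ℤ → F :=
  fun n => if 0 ≤ n then P.coeff n.toNat else 0

/-- `f` vanishes to order exactly `m` at `z0`, as witnessed by a convergent local
power series expansion of `f` about `z0`. -/
def HasOrderAt (f : F → F) (z0 : F) (m : ℕ) : Prop :=
  ∃ δ > (0 : ℝ), ∃ b : ℕ → F,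
    (∀ z : F, ‖z - z0‖ < δ → f z = ∑' n : ℕ, b n * (z - z0) ^ n) ∧
    (∀ j < m, b j = 0) ∧ b m ≠ 0

/-- Order of vanishing at `0` of a power series. -/
noncomputable def ord0 (c : ℕ → F) : ℕ := sInf {n : ℕ | c n ≠ 0}

/-- Radius of convergence of a power series: the sup of the radii `r` such that
the terms `|c_j| r^j` tend to `0`. -/
noncomputable def convRadius (c : ℕ → F) : ENNReal :=
  ⨆ (r : NNReal) (_ : Tendsto (fun j : ℕ => ‖c j‖ * (r : ℝ) ^ j) atTop (nhds 0)), (r : ENNReal)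

section Aux


variable {F : Type*} [NontriviallyNormedField F] [CompleteSpace F] [IsUltrametricDist F]

noncomputable def Dc (c : ℕ → F) (u : F) : ℕ → F :=
  fun n => ∑' j : ℕ, ((j + n).choose n : F) * c (j + n) * u ^ j

lemma Dc_def (c : ℕ → F) (u : F) (n : ℕ) :
    Dc c u n = ∑' j : ℕ, ((j + n).choose n : F) * c (j + n) * u ^ j := rfl

omit [CompleteSpace F] [IsUltrametricDist F] in
lemma tendsto_add_cofinite_atTop :
    Tendsto (fun p : ℕ × ℕ => p.1 + p.2) cofinite atTop := by
  rw [tendsto_atTop]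
  intro N
  rw [eventually_cofinite]
  have hsub : {p : ℕ × ℕ | ¬ N ≤ p.1 + p.2} ⊆ ↑(Finset.range N ×ˢ Finset.range N) := by
    intro p hp
    simp only [Set.mem_setOf_eq, not_le] at hp
    simp only [Finset.coe_product, Set.mem_prod, Finset.mem_coe, Finset.mem_range]
    omega
  exact Set.Finite.subset (Finset.finite_toSet _) hsub

omit [CompleteSpace F] [IsUltrametricDist F] in
lemma radius_mono {c : ℕ → F} {r r' : ℝ} (h0 : 0 ≤ r) (hrr : r ≤ r')
    (h : Tendsto (fun j : ℕ => ‖c j‖ * r' ^ j) atTop (nhds 0)) :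
    Tendsto (fun j : ℕ => ‖c j‖ * r ^ j) atTop (nhds 0) :=
  squeeze_zero (fun j => by positivity)
    (fun j => mul_le_mul_of_nonneg_left (pow_le_pow_left₀ h0 hrr j) (norm_nonneg _)) h

lemma swap_key {f : ℕ × ℕ → F} {M : ℕ → ℝ}
    (hM : Tendsto M atTop (nhds 0))
    (hfM : ∀ p : ℕ × ℕ, ‖f p‖ ≤ M (p.1 + p.2)) :
    Summable f ∧
      (∑' a : ℕ, ∑' b : ℕ, f (a, b)) = ∑' m : ℕ, ∑ p ∈ Finset.HasAntidiagonal.antidiagonal m, f p := by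
  have hnorm : Tendsto (fun p : ℕ × ℕ => ‖f p‖) cofinite (nhds 0) :=
    squeeze_zero (fun p => norm_nonneg _) hfM (hM.comp tendsto_add_cofinite_atTop)
  have hf0 : Tendsto f cofinite (nhds 0) := tendsto_zero_iff_norm_tendsto_zero.mpr hnorm
  have hs : Summable f := NonarchimedeanAddGroup.summable_of_tendsto_cofinite_zero hf0
  refine ⟨hs, ?_⟩
  rw [← Summable.tsum_prod' hs hs.prod_factor]
  have he : Summable (fun x : (Σ n : ℕ, Finset.HasAntidiagonal.antidiagonal n) =>
      f (Finset.HasAntidiagonal.sigmaAntidiagonalEquivProd x)) :=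
    (Finset.HasAntidiagonal.sigmaAntidiagonalEquivProd.summable_iff).mpr hs
  calc ∑' p : ℕ × ℕ, f p
      = ∑' x : (Σ n : ℕ, Finset.HasAntidiagonal.antidiagonal n), f (Finset.HasAntidiagonal.sigmaAntidiagonalEquivProd x) :=
        (Finset.HasAntidiagonal.sigmaAntidiagonalEquivProd.tsum_eq f).symm
    _ = ∑' (m : ℕ) (p : Finset.HasAntidiagonal.antidiagonal m), f (p : ℕ × ℕ) :=
        Summable.tsum_sigma' (fun m => Summable.of_finite) he
    _ = ∑' m : ℕ, ∑ p ∈ Finset.HasAntidiagonal.antidiagonal m, f p := by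
        congr 1
        ext m
        exact Finset.tsum_subtype (Finset.HasAntidiagonal.antidiagonal m) f

lemma eval_shift {c : ℕ → F} {u w : F} {r : ℝ}
    (hr : Tendsto (fun j : ℕ => ‖c j‖ * r ^ j) atTop (nhds 0))
    (hu : ‖u‖ ≤ r) (hw : ‖w‖ ≤ r) :
    (∑' n : ℕ, Dc c u n * w ^ n) = ∑' m : ℕ, c m * (u + w) ^ m := by
  set f : ℕ × ℕ → F :=
    fun p => (((p.2 + p.1).choose p.1 : F) * c (p.2 + p.1) * u ^ p.2) * w ^ p.1 with hf
  have hbound : ∀ p : ℕ × ℕ, ‖f p‖ ≤ ‖c (p.1 + p.2)‖ * r ^ (p.1 + p.2) := by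
    rintro ⟨n, j⟩
    have hr0 : (0:ℝ) ≤ r := (norm_nonneg u).trans hu
    simp only [hf]
    calc ‖(((j + n).choose n : F) * c (j + n) * u ^ j) * w ^ n‖
        = ‖((j + n).choose n : F)‖ * ‖c (j + n)‖ * ‖u‖ ^ j * ‖w‖ ^ n := by
          rw [norm_mul, norm_mul, norm_mul, norm_pow, norm_pow]
      _ ≤ 1 * ‖c (j + n)‖ * r ^ j * r ^ n := by
          gcongr <;> first
            | exact IsUltrametricDist.norm_natCast_le_one F _
            | exact hu
            | exact hw
            | positivity
            | exact mul_nonneg (mul_nonneg zero_le_one (norm_nonneg _)) (pow_nonneg hr0 _)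
      _ = ‖c (n + j)‖ * r ^ (n + j) := by rw [one_mul, Nat.add_comm j n, pow_add]; ring
  obtain ⟨hs, hkey⟩ := swap_key hr hbound
  have hanti : ∀ m : ℕ, ∑ p ∈ Finset.HasAntidiagonal.antidiagonal m, f p = c m * (u + w) ^ m := by
    intro m
    rw [Finset.Nat.sum_antidiagonal_eq_sum_range_succ_mk]
    have huw : (u + w) ^ m = (w + u) ^ m := by rw [add_comm]
    rw [huw, add_pow, Finset.mul_sum]
    refine Finset.sum_congr rfl fun k hk => ?_
    rw [Finset.mem_range, Nat.lt_succ_iff] at hk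
    have hkm : m - k + k = m := Nat.sub_add_cancel hk
    simp only [hf, hkm]
    ring
  calc (∑' n : ℕ, Dc c u n * w ^ n)
      = ∑' n : ℕ, ∑' j : ℕ, f (n, j) := by
        refine tsum_congr fun n => ?_
        rw [Dc_def]
        exact (tsum_mul_right).symm
    _ = ∑' m : ℕ, ∑ p ∈ Finset.HasAntidiagonal.antidiagonal m, f p := hkey
    _ = ∑' m : ℕ, c m * (u + w) ^ m := tsum_congr hanti

lemma Dc_tendsto {c : ℕ → F} {u : F} {r : ℝ} (hr0 : 0 < r)
    (hr : Tendsto (fun j : ℕ => ‖c j‖ * r ^ j) atTop (nhds 0)) (hu : ‖u‖ ≤ r) :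
    Tendsto (fun n : ℕ => ‖Dc c u n‖ * r ^ n) atTop (nhds 0) := by
  have h0 : ∀ ε > (0:ℝ), ∀ᶠ n in atTop, ‖Dc c u n‖ * r ^ n ≤ ε := by
    intro ε hε
    have hev : ∀ᶠ m in atTop, ‖c m‖ * r ^ m < ε := hr.eventually (gt_mem_nhds hε)
    rw [eventually_atTop] at hev ⊢
    obtain ⟨N, hN⟩ := hev
    refine ⟨N, fun n hn => ?_⟩
    have hrn : (0:ℝ) < r ^ n := pow_pos hr0 n
    have hterm : ∀ j : ℕ, ‖((j + n).choose n : F) * c (j + n) * u ^ j‖ ≤ ε / r ^ n := by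
      intro j
      rw [le_div_iff₀ hrn]
      calc ‖((j + n).choose n : F) * c (j + n) * u ^ j‖ * r ^ n
          = ‖((j + n).choose n : F)‖ * ‖c (j + n)‖ * ‖u‖ ^ j * r ^ n := by
            rw [norm_mul, norm_mul, norm_pow]
        _ ≤ 1 * ‖c (j + n)‖ * r ^ j * r ^ n := by
            gcongr <;> first
              | exact IsUltrametricDist.norm_natCast_le_one F _
              | exact hu
              | exact mul_nonneg (mul_nonneg zero_le_one (norm_nonneg _)) (pow_nonneg hr0.le _)
        _ = ‖c (j + n)‖ * r ^ (j + n) := by rw [one_mul, pow_add]; ring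
        _ ≤ ε := (hN (j + n) (le_trans hn (Nat.le_add_left n j))).le
    have hDc : ‖Dc c u n‖ ≤ ε / r ^ n :=
      IsUltrametricDist.norm_tsum_le_of_forall_le_of_nonneg (by positivity) hterm
    calc ‖Dc c u n‖ * r ^ n ≤ (ε / r ^ n) * r ^ n := by gcongr
      _ = ε := div_mul_cancel₀ ε hrn.ne'
  rw [NormedAddCommGroup.tendsto_nhds_zero]
  intro ε hε
  filter_upwards [h0 (ε/2) (by positivity)] with n hn
  rw [Real.norm_eq_abs, abs_of_nonneg (mul_nonneg (norm_nonneg _) (pow_nonneg hr0.le _))]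
  linarith

lemma Dc_comp {c : ℕ → F} {u : F} {r : ℝ} (hr0 : 0 < r)
    (hr : Tendsto (fun j : ℕ => ‖c j‖ * r ^ j) atTop (nhds 0)) (hu : ‖u‖ ≤ r) :
    Dc (Dc c u) (-u) = c := by
  funext m
  set f : ℕ × ℕ → F := fun p =>
    (((p.1 + m).choose m : F) *
      (((p.2 + (p.1 + m)).choose (p.1 + m) : F) * c (p.2 + (p.1 + m)) * u ^ p.2)) *
        (-u) ^ p.1 with hf
  have hM : Tendsto (fun s : ℕ => ‖c (s + m)‖ * r ^ (s + m) * (r ^ m)⁻¹) atTop (nhds 0) := by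
    have := (hr.comp (tendsto_add_atTop_nat m)).mul_const ((r ^ m)⁻¹)
    simpa using this
  have hbound : ∀ p : ℕ × ℕ,
      ‖f p‖ ≤ ‖c ((p.1 + p.2) + m)‖ * r ^ ((p.1 + p.2) + m) * (r ^ m)⁻¹ := by
    rintro ⟨n, j⟩
    have hidx : j + (n + m) = n + j + m := by omega
    have hrm : r ^ (n + j + m) * (r ^ m)⁻¹ = r ^ (n + j) := by
      rw [pow_add, mul_inv_cancel_right₀ (pow_ne_zero m hr0.ne')]
    simp only [hf, hidx]
    calc ‖(((n + m).choose m : F) *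
          (((n + j + m).choose (n + m) : F) * c (n + j + m) * u ^ j)) * (-u) ^ n‖
        = ‖((n + m).choose m : F)‖ *
            (‖((n + j + m).choose (n + m) : F)‖ * ‖c (n + j + m)‖ * ‖u‖ ^ j) * ‖u‖ ^ n := by
          simp only [norm_mul, norm_pow, norm_neg]
      _ ≤ 1 * (1 * ‖c (n + j + m)‖ * r ^ j) * r ^ n := by
          gcongr <;> first
            | exact IsUltrametricDist.norm_natCast_le_one F _
            | exact hu
            | exact mul_nonneg (mul_nonneg zero_le_one (norm_nonneg _)) (pow_nonneg hr0.le _)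
      _ = ‖c (n + j + m)‖ * r ^ (n + j + m) * (r ^ m)⁻¹ := by
          rw [one_mul, one_mul, mul_assoc, ← pow_add, mul_assoc, hrm, Nat.add_comm j n]
  obtain ⟨hs, hkey⟩ := swap_key hM hbound
  have hDc : Dc (Dc c u) (-u) m = ∑' n : ℕ, ∑' j : ℕ, f (n, j) := by
    rw [Dc_def]
    refine tsum_congr fun n => ?_
    rw [Dc_def]
    simp only [hf]
    rw [tsum_mul_right, tsum_mul_left]
  have hanti : ∀ k : ℕ, ∑ p ∈ Finset.HasAntidiagonal.antidiagonal k, f p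
      = ((k + m).choose m : F) * c (k + m) * (0 : F) ^ k := by
    intro k
    rw [Finset.Nat.sum_antidiagonal_eq_sum_range_succ_mk]
    have h0 : (0:F) ^ k = (-u + u) ^ k := by rw [neg_add_cancel]
    rw [h0, add_pow, Finset.mul_sum]
    refine Finset.sum_congr rfl fun n hn => ?_
    rw [Finset.mem_range, Nat.lt_succ_iff] at hn
    have h1 : k - n + (n + m) = k + m := by omega
    have h2 : (k + m).choose (n + m) * (n + m).choose m
        = (k + m).choose m * k.choose n := by
      have h3 := Nat.choose_mul (n := k + m) (k := n + m) (s := m)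
        (by omega)
      simpa using h3
    have h2' : ((n + m).choose m : F) * ((k + m).choose (n + m) : F)
        = ((k + m).choose m : F) * (k.choose n : F) := by
      rw [mul_comm, ← Nat.cast_mul, ← Nat.cast_mul, h2]
    simp only [hf, h1]
    linear_combination (c (k + m) * u ^ (k - n) * (-u) ^ n) * h2'
  rw [hDc, hkey, tsum_congr hanti,
    tsum_eq_single 0 (fun k hk => by rw [zero_pow hk, mul_zero])]
  simp

omit [CompleteSpace F] [IsUltrametricDist F] in
lemma exists_radius {c : ℕ → F} {x : ENNReal} (hx : x < convRadius c) :
    ∃ r : NNReal, Tendsto (fun j : ℕ => ‖c j‖ * (r : ℝ) ^ j) atTop (nhds 0) ∧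
      x < (r : ENNReal) := by
  rw [convRadius, lt_iSup_iff] at hx
  obtain ⟨r, hr⟩ := hx
  rw [lt_iSup_iff] at hr
  obtain ⟨ht, hlt⟩ := hr
  exact ⟨r, ht, hlt⟩

lemma convRadius_le_Dc {c : ℕ → F} {u : F}
    (hu : ENNReal.ofReal ‖u‖ < convRadius c) :
    convRadius c ≤ convRadius (Dc c u) := by
  obtain ⟨r1, hr1t, hr1⟩ := exists_radius hu
  have hur1 : ‖u‖ < (r1 : ℝ) := by
    rw [← ENNReal.ofReal_coe_nnreal] at hr1
    exact (ENNReal.ofReal_lt_ofReal_iff_of_nonneg (norm_nonneg _)).mp hr1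
  rw [convRadius]
  refine iSup₂_le fun r hrt => ?_
  have hmax : Tendsto (fun j : ℕ => ‖c j‖ * ((max r r1 : NNReal) : ℝ) ^ j) atTop (nhds 0) := by
    rcases max_choice r r1 with h | h <;> rw [h]
    · exact hrt
    · exact hr1t
  have hr'0 : (0:ℝ) < ((max r r1 : NNReal) : ℝ) :=
    lt_of_le_of_lt (norm_nonneg u) (lt_of_lt_of_le hur1 (by exact_mod_cast le_max_right r r1))
  have hD := Dc_tendsto hr'0 hmax
    (le_trans hur1.le (by exact_mod_cast le_max_right r r1))
  have hDr : Tendsto (fun n : ℕ => ‖Dc c u n‖ * (r : ℝ) ^ n) atTop (nhds 0) :=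
    radius_mono r.coe_nonneg (by exact_mod_cast le_max_left r r1) hD
  rw [convRadius]
  exact le_iSup₂ (f := fun (r : NNReal)
    (_ : Tendsto (fun n : ℕ => ‖Dc c u n‖ * (r : ℝ) ^ n) atTop (nhds 0)) => (r : ENNReal)) r hDr


end Aux

/-- **Change of center for power series.** If `f(z) = ∑ c_j (z-a)^j` has radius of
convergence `R` with `0 < R ≤ ∞` and `|b - a| < R`, then `∑ Dⁿf(b) (z-b)^n` also has
radius of convergence `R` and converges to `f(z)` for `|z - b| < R`.  Here
`Dⁿf(b) = ∑_{j≥n} binom(j,n) c_j (b-a)^{j-n}` is the `n`-th Hasse derivative at `b`. -/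

theorem stmt1 {F : Type*} [NontriviallyNormedField F] [CompleteSpace F] [IsAlgClosed F]
    (hna : IsNonarchimedean (fun x : F => ‖x‖))
    (a b : F) (c : ℕ → F)
    (hR : 0 < convRadius c)
    (hb : ENNReal.ofReal ‖b - a‖ < convRadius c) :
    convRadius (fun n : ℕ => ∑' j : ℕ, ((j + n).choose n : F) * c (j + n) * (b - a) ^ j)
        = convRadius c ∧
      ∀ z : F, ENNReal.ofReal ‖z - b‖ < convRadius c →
        psEval (fun n : ℕ => ∑' j : ℕ, ((j + n).choose n : F) * c (j + n) * (b - a) ^ j)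
            (z - b)
          = psEval c (z - a) := by
  letI : IsUltrametricDist F :=
    IsUltrametricDist.isUltrametricDist_of_isNonarchimedean_norm hna
  set u : F := b - a with hu
  have hDceq : (fun n : ℕ => ∑' j : ℕ, ((j + n).choose n : F) * c (j + n) * u ^ j)
      = Dc c u := rfl
  obtain ⟨r1, hr1t, hr1⟩ := exists_radius hb
  have hur1 : ‖u‖ < (r1 : ℝ) := by
    rw [← ENNReal.ofReal_coe_nnreal] at hr1
    exact (ENNReal.ofReal_lt_ofReal_iff_of_nonneg (norm_nonneg _)).mp hr1
  have hr10 : (0:ℝ) < (r1 : ℝ) := lt_of_le_of_lt (norm_nonneg u) hur1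
  have hle1 : convRadius c ≤ convRadius (Dc c u) := convRadius_le_Dc hb
  have hcomp : Dc (Dc c u) (-u) = c := Dc_comp hr10 hr1t hur1.le
  have hb2 : ENNReal.ofReal ‖-u‖ < convRadius (Dc c u) := by
    rw [norm_neg]
    exact lt_of_lt_of_le hb hle1
  have hle2 : convRadius (Dc c u) ≤ convRadius c := by
    have := convRadius_le_Dc hb2
    rwa [hcomp] at this
  constructor
  · rw [hDceq]
    exact le_antisymm hle2 hle1
  · intro z hz
    obtain ⟨r2, hr2t, hr2⟩ := exists_radius hz
    have hwr2 : ‖z - b‖ < (r2 : ℝ) := by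
      rw [← ENNReal.ofReal_coe_nnreal] at hr2
      exact (ENNReal.ofReal_lt_ofReal_iff_of_nonneg (norm_nonneg _)).mp hr2
    have hmax : Tendsto (fun j : ℕ => ‖c j‖ * ((max r1 r2 : NNReal) : ℝ) ^ j)
        atTop (nhds 0) := by
      rcases max_choice r1 r2 with h | h <;> rw [h]
      · exact hr1t
      · exact hr2t
    have hue : ‖u‖ ≤ ((max r1 r2 : NNReal) : ℝ) :=
      le_trans hur1.le (by exact_mod_cast le_max_left r1 r2)
    have hwe : ‖z - b‖ ≤ ((max r1 r2 : NNReal) : ℝ) :=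
      le_trans hwr2.le (by exact_mod_cast le_max_right r1 r2)
    show (∑' n : ℕ, Dc c u n * (z - b) ^ n) = ∑' n : ℕ, c n * (z - a) ^ n
    rw [eval_shift hmax hue hwe]
    have : u + (z - b) = z - a := by rw [hu]; ring
    rw [this]
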